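/- arXiv:1711.00002 — 7 statements merged into one kernel-verified Lean document; each statement's English description precedes it below -/
import Mathlib

section
/- In a directed graph on vertices {0,1,...,L} where each vertex i ≥ 1 has edges to vertices i - round(2^k) for k = 0, 1, ..., floor(log2(i)), the shortest-path distance between any two vertices i > j is at most log2(i - j) + 1. -/
/-- `stepsTo E m i j` : there is a directed path of exactly `m` edges from `i` to `j`. -/
def stepsTo {α : Type*} (E : α → α → Prop) : ℕ → α → α → Prop
  | 0, i, j => i = j
  | m + 1, i, j => ∃ k, E i k ∧ stepsTo E m k j

/-- Log-DenseNet connection graph on `{0,...,L}`: vertex `i ≥ 1` has an edge to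
`i - round(2^k) = i - 2^k` for each `0 ≤ k ≤ ⌊log₂ i⌋`. -/
def logDenseEdge (L : ℕ) (i j : ℕ) : Prop :=
  1 ≤ i ∧ i ≤ L ∧ ∃ k ≤ Nat.log 2 i, j = i - 2 ^ k

lemma aux_path (L : ℕ) : ∀ d : ℕ, ∀ i j : ℕ, i ≤ L → j + d = i → 1 ≤ d →
    ∃ m, m ≤ Nat.log 2 d + 1 ∧ stepsTo (logDenseEdge L) m i j := by
  intro d
  induction d using Nat.strong_induction_on with
  | _ d ih =>
    intro i j hiL hji hd
    set k := Nat.log 2 d with hk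
    have h2k : 2 ^ k ≤ d := Nat.pow_log_le_self 2 (by omega)
    have hki : k ≤ Nat.log 2 i := Nat.log_mono_right (by omega)
    have hedge : logDenseEdge L i (i - 2 ^ k) :=
      ⟨by omega, hiL, k, hki, rfl⟩
    have h2ki : 2 ^ k ≤ i := by omega
    have hone : 1 ≤ 2 ^ k := Nat.one_le_two_pow
    set d' := d - 2 ^ k with hd'
    have hsum : d' + 2 ^ k = d := Nat.sub_add_cancel h2k
    rcases Nat.eq_zero_or_pos d' with h0 | hpos
    · refine ⟨1, by omega, i - 2 ^ k, hedge, ?_⟩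
      show i - 2 ^ k = j
      omega
    · have hlt : d' < d := by omega
      have hsub : i - 2 ^ k ≤ L := le_trans (Nat.sub_le _ _) hiL
      have hjd : j + d' = i - 2 ^ k := by
        refine Nat.eq_sub_of_add_eq ?_
        rw [add_assoc, hsum]; exact hji
      have hrec := ih d' hlt (i - 2 ^ k) j hsub hjd hpos
      obtain ⟨m, hm, hsteps⟩ := hrec
      have hd2 : d < 2 ^ (k + 1) := by
        rw [hk]; exact Nat.lt_pow_succ_log_self (by norm_num) d
      have hpow : 2 ^ (k + 1) = 2 ^ k + 2 ^ k := by rw [pow_succ]; ring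
      have hd'lt : d' < 2 ^ k := by omega
      have hlog : Nat.log 2 d' < k := Nat.log_lt_of_lt_pow (by omega) hd'lt
      exact ⟨m + 1, by omega, i - 2 ^ k, hedge, hsteps⟩

/-- The shortest-path distance between any two vertices `i > j` is at most `log₂(i-j) + 1`. -/
theorem stmt0 (L i j : ℕ) (hi : i ≤ L) (hij : j < i) :
    ∃ m : ℕ, stepsTo (logDenseEdge L) m i j ∧ (m : ℝ) ≤ Real.logb 2 ((i : ℝ) - j) + 1 := by
  obtain ⟨m, hm, hsteps⟩ := aux_path L (i - j) i j hi (by omega) (by omega)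
  refine ⟨m, hsteps, ?_⟩
  have h1 : ((i : ℝ) - j) = ((i - j : ℕ) : ℝ) := by
    push_cast [Nat.cast_sub hij.le]; ring
  rw [h1]
  have h2 : (Nat.log 2 (i - j) : ℝ) ≤ Real.logb 2 (i - j : ℕ) :=
    Real.natLog_le_logb _ _
  calc (m : ℝ) ≤ (Nat.log 2 (i - j) : ℝ) + 1 := by exact_mod_cast hm
    _ ≤ _ := by linarith
end

section
/- In the half-dense NEAREST connection graph on {0,...,L}, where each vertex i ≥ 2 has edges to all j with i/2 ≤ j < i (and vertex 1 has an edge to 0), the distance between any two vertices i > j ≥ 1 is at most ceil(log2(i/j)) + 1; consequently, the maximum distance over all pairs is O(log L). -/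
/-- Half-dense NEAREST graph on `{0,...,L}`: each `i ≥ 2` has edges to all `j` with
`i/2 ≤ j < i`, and vertex `1` has an edge to `0`. -/
def halfEdge (L : ℕ) (i j : ℕ) : Prop :=
  i ≤ L ∧ ((2 ≤ i ∧ i ≤ 2 * j ∧ j < i) ∨ (i = 1 ∧ j = 0))

lemma key (L : ℕ) : ∀ i j : ℕ, 1 ≤ j → j < i → i ≤ L →
    ∃ m, 1 ≤ m ∧ stepsTo (halfEdge L) m i j ∧ 2 ^ (m - 1) * j < i := by
  intro i
  induction i using Nat.strong_induction_on with
  | _ i ih =>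
    intro j hj hji hiL
    by_cases h : i ≤ 2 * j
    · exact ⟨1, le_refl _, ⟨j, ⟨hiL, Or.inl ⟨by omega, h, hji⟩⟩, rfl⟩, by simpa using hji⟩
    · set k := (i + 1) / 2 with hk
      have hk1 : j < k := by omega
      have hk2 : k < i := by omega
      obtain ⟨m, hm1, hm2, hm3⟩ := ih k hk2 j hj hk1 (le_trans hk2.le hiL)
      refine ⟨m + 1, by omega, ⟨k, ⟨hiL, Or.inl ⟨by omega, by omega, hk2⟩⟩, hm2⟩, ?_⟩
      have h2 : 2 ^ (m + 1 - 1) * j = 2 * (2 ^ (m - 1) * j) := by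
        rw [← mul_assoc, ← pow_succ']
        congr 2
        omega
      rw [h2]
      set p := 2 ^ (m - 1) * j with hp
      omega

/-- The distance between any two vertices `i > j ≥ 1` is at most `⌈log₂(i/j)⌉ + 1`;
consequently the maximum distance over all pairs is `O(log L)` (bounded by `log₂ L + 2`). -/
theorem stmt6 (L i j : ℕ) (hi : i ≤ L) (hj : 1 ≤ j) (hij : j < i) :
    (∃ m : ℕ, stepsTo (halfEdge L) m i j ∧
      (m : ℝ) ≤ (⌈Real.logb 2 ((i : ℝ) / j)⌉ : ℝ) + 1) ∧
    (∃ m : ℕ, stepsTo (halfEdge L) m i j ∧ (m : ℝ) ≤ Real.logb 2 L + 2) := by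
  obtain ⟨m, hm1, hm2, hm3⟩ := key L i j hj hij hi
  have hjpos : (0 : ℝ) < (j : ℝ) := by exact_mod_cast hj
  have hipos : (0 : ℝ) < (i : ℝ) := by exact_mod_cast lt_trans (Nat.lt_of_lt_of_le Nat.zero_lt_one hj) hij
  have hlt : (2 : ℝ) ^ (m - 1) < (i : ℝ) / j := by
    rw [lt_div_iff₀ hjpos]
    exact_mod_cast hm3
  have hlog1 : ((m - 1 : ℕ) : ℝ) < Real.logb 2 ((i : ℝ) / j) := by
    calc ((m - 1 : ℕ) : ℝ) = Real.logb 2 ((2 : ℝ) ^ (m - 1)) := by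
          simp [Real.logb_pow]
      _ < Real.logb 2 ((i : ℝ) / j) := by
          apply Real.logb_lt_logb (by norm_num) (by positivity) hlt
  constructor
  · refine ⟨m, hm2, ?_⟩
    have := Int.le_ceil (Real.logb 2 ((i : ℝ) / j))
    have hm' : ((m : ℝ) - 1) = ((m - 1 : ℕ) : ℝ) := by
      have : 1 ≤ m := hm1
      push_cast [this]
      ring
    linarith
  · refine ⟨m, hm2, ?_⟩
    have hlog2 : ((m - 1 : ℕ) : ℝ) < Real.logb 2 (L : ℝ) := by
      have hle : (i : ℝ) / j ≤ (L : ℝ) := by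
        rw [div_le_iff₀ hjpos]
        have h1 : (i : ℝ) ≤ (L : ℝ) := by exact_mod_cast hi
        have h2 : (1:ℝ) ≤ (j:ℝ) := by exact_mod_cast hj
        nlinarith
      calc ((m - 1 : ℕ) : ℝ) < Real.logb 2 ((i : ℝ) / j) := hlog1
        _ ≤ Real.logb 2 (L : ℝ) := Real.logb_le_logb_of_le (by norm_num) (by positivity) hle
    have hm' : ((m : ℝ) - 1) = ((m - 1 : ℕ) : ℝ) := by
      have : 1 ≤ m := hm1
      push_cast [this]
      ring
    linarith
end

section
/- In the NearestHalfAndLog graph on {1,...,L}, where vertex i has edges to every j with i/2 < j < i, and additionally to round(i/2^k) for k = 1, 2, ..., the distance between any pair of vertices i > j is at most 2. -/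
/-- NearestHalfAndLog graph on `{1,...,L}`: vertex `i` has an edge to every `j` with
`i/2 < j < i`, and additionally to `round(i/2^k)` for each `k ≥ 1` with `round(i/2^k) ≥ 1`. -/
def nhlEdge (L : ℕ) (i j : ℕ) : Prop :=
  1 ≤ j ∧ j < i ∧ i ≤ L ∧
    (i < 2 * j ∨ ∃ k : ℕ, 1 ≤ k ∧ (j : ℤ) = round ((i : ℚ) / 2 ^ k))

/-- The distance between any pair of vertices `i > j ≥ 1` is at most `2`. -/
theorem stmt8 (L i j : ℕ) (hi : i ≤ L) (hj : 1 ≤ j) (hij : j < i) :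
    ∃ m ≤ 2, stepsTo (nhlEdge L) m i j := by
  rcases lt_or_ge i (2 * j) with h2 | h2
  · exact ⟨1, by norm_num, j, ⟨hj, hij, hi, Or.inl h2⟩, rfl⟩
  have hj0 : 0 < j := hj
  have hij2 : 2 ≤ i / j := (Nat.le_div_iff_mul_le hj0).mpr (by linarith)
  set k := Nat.log 2 (i / j) with hkdef
  have hk1 : 1 ≤ k := Nat.log_pos (by norm_num) hij2
  have hdiv0 : i / j ≠ 0 := by omega
  have hlow : 2 ^ k * j ≤ i := by
    calc 2 ^ k * j ≤ (i / j) * j :=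
          Nat.mul_le_mul_right j (Nat.pow_log_le_self 2 hdiv0)
      _ ≤ i := Nat.div_mul_le_self i j
  have hhigh : i < 2 ^ (k + 1) * j :=
    (Nat.div_lt_iff_lt_mul hj0).mp (Nat.lt_pow_succ_log_self (by norm_num) (i / j))
  -- rational setup
  set x : ℚ := (i : ℚ) / 2 ^ k with hxdef
  have hpow : (0 : ℚ) < 2 ^ k := by positivity
  have hxl : (j : ℚ) ≤ x := by
    rw [hxdef, le_div_iff₀ hpow]
    have : ((2 ^ k * j : ℕ) : ℚ) ≤ (i : ℚ) := by exact_mod_cast hlow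
    push_cast at this ⊢
    linarith
  have hxh : x < 2 * j := by
    rw [hxdef, div_lt_iff₀ hpow]
    have : (i : ℚ) < ((2 ^ (k + 1) * j : ℕ) : ℚ) := by exact_mod_cast hhigh
    push_cast at this ⊢
    ring_nf at this ⊢
    linarith
  set r : ℤ := round x with hrdef
  have habs : |x - (r : ℚ)| ≤ 1 / 2 := abs_sub_round x
  have habs1 : x - 1 / 2 ≤ (r : ℚ) := by
    have := abs_le.mp habs
    linarith [this.1, this.2]
  have habs2 : (r : ℚ) ≤ x + 1 / 2 := by
    have := abs_le.mp habs
    linarith [this.1, this.2]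
  have hrj : (j : ℤ) ≤ r := by
    have : ((j : ℤ) : ℚ) - 1 < (r : ℚ) := by push_cast; linarith
    have h' : (j : ℤ) - 1 < r := by exact_mod_cast this
    omega
  have hr2j : r ≤ 2 * (j : ℤ) := by
    have : (r : ℚ) < ((2 * (j : ℤ) : ℤ) : ℚ) + 1 := by push_cast; linarith
    have h' : r < 2 * (j : ℤ) + 1 := by exact_mod_cast this
    omega
  set rn : ℕ := r.toNat with hrndef
  have hrncast : (rn : ℤ) = r := Int.toNat_of_nonneg (by omega)
  have hrnj : j ≤ rn := by omega
  have hrn2j : rn ≤ 2 * j := by omega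
  -- key: r = round(i/2^k)
  have hround : (rn : ℤ) = round ((i : ℚ) / 2 ^ k) := by rw [hrncast, hrdef]
  rcases eq_or_lt_of_le hrnj with heq | hlt
  · -- rn = j : direct edge
    exact ⟨1, by norm_num, j, ⟨hj, hij, hi, Or.inr ⟨k, hk1, heq ▸ hround⟩⟩, rfl⟩
  rcases eq_or_lt_of_le hrn2j with heq2 | hlt2
  · -- rn = 2j : i > 2j and second edge via round(rn/2)
    have hx2j : 2 * (j : ℚ) - 1 / 2 ≤ x := by
      have : ((rn : ℤ) : ℚ) = (r : ℚ) := by exact_mod_cast hrncast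
      have hrq : (r : ℚ) = 2 * j := by
        rw [← this]; push_cast [heq2]; ring
      linarith
    have h2k : (2 : ℚ) ≤ 2 ^ k := by
      calc (2 : ℚ) = 2 ^ 1 := by norm_num
        _ ≤ 2 ^ k := by
            apply pow_le_pow_right₀ (by norm_num) hk1
    have hi4j : (4 : ℚ) * j - 1 ≤ (i : ℚ) := by
      have hxi : (i : ℚ) = x * 2 ^ k := by
        rw [hxdef]; field_simp
      have hxpos : (0 : ℚ) ≤ 2 * (j : ℚ) - 1 / 2 := by
        have : (1 : ℚ) ≤ j := by exact_mod_cast hj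
        linarith
      have : (2 * (j : ℚ) - 1 / 2) * 2 ≤ x * 2 ^ k := by
        apply mul_le_mul hx2j h2k (by norm_num) (by linarith)
      rw [hxi]; linarith
    have h2ji : 2 * j < i := by
      have : (2 * j : ℚ) < (i : ℚ) := by
        have hjq : (1 : ℚ) ≤ j := by exact_mod_cast hj
        linarith
      exact_mod_cast this
    have hrni : rn < i := by omega
    refine ⟨2, le_refl 2, rn, ⟨by omega, hrni, hi, Or.inr ⟨k, hk1, hround⟩⟩,
      j, ⟨hj, by omega, by omega, Or.inr ⟨1, le_refl 1, ?_⟩⟩, rfl⟩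
    have : ((rn : ℚ) / 2 ^ 1) = (j : ℚ) := by
      rw [heq2]; push_cast; ring
    rw [this, round_natCast]
  · -- j < rn < 2j
    have hrni : rn < i := by omega
    exact ⟨2, le_refl 2, rn, ⟨by omega, hrni, hi, Or.inr ⟨k, hk1, hround⟩⟩,
      j, ⟨hj, hlt, by omega, Or.inl (by omega)⟩, rfl⟩
end

section
/- One level of the lglg_conn construction on a segment of n layers adds exactly n + 0.5|K|² - 1.5|K| connections, which is strictly less than 1.5n + sqrt(n) + 3.125, where |K| = 1 + ceil((n-1)/floor(sqrt(n))). -/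
/-- One level of the `lglg_conn` construction on a segment of `n` layers adds exactly
`n + 0.5|K|² - 1.5|K|` connections (`0.5|K|(|K|-1)` from the key clique plus `n - |K|`
from non-key layers), which is strictly less than `1.5n + √n + 3.125`, where
`|K| = 1 + ⌈(n-1)/⌊√n⌋⌉`. -/
theorem stmt10 (n : ℕ) (hn : 2 ≤ n) (K : ℝ)
    (hK : K = 1 + (⌈((n : ℝ) - 1) / (Nat.sqrt n : ℝ)⌉ : ℝ)) :
    0.5 * K * (K - 1) + ((n : ℝ) - K) = (n : ℝ) + 0.5 * K ^ 2 - 1.5 * K ∧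
    (n : ℝ) + 0.5 * K ^ 2 - 1.5 * K < 1.5 * n + Real.sqrt n + 3.125 := by
  constructor
  · ring
  · set s := Nat.sqrt n with hs
    have hs1 : 1 ≤ s := Nat.sqrt_pos.mpr (by omega)
    have hs2 : s * s ≤ n := by have := Nat.sqrt_le' n; nlinarith [this]
    have hs3 : n < (s + 1) * (s + 1) := by have := Nat.lt_succ_sqrt' n; nlinarith [this]
    have hsr : (s : ℝ) ≤ Real.sqrt n := Real.nat_sqrt_le_real_sqrt
    have hsqnn : (0:ℝ) ≤ Real.sqrt n := Real.sqrt_nonneg _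
    have hspos : (0:ℝ) < (s : ℝ) := by exact_mod_cast hs1
    have hnR : (2:ℝ) ≤ (n:ℝ) := by exact_mod_cast hn
    have hs2R : (s:ℝ) * s ≤ (n:ℝ) := by exact_mod_cast hs2
    have hs1R : (1:ℝ) ≤ (s:ℝ) := by exact_mod_cast hs1
    -- lower bound on K
    have hcpos : (1:ℤ) ≤ ⌈((n : ℝ) - 1) / (s : ℝ)⌉ := by
      have := Int.ceil_pos.mpr (div_pos (by linarith : (0:ℝ) < (n:ℝ)-1) hspos)
      omega
    have hK2 : (2:ℝ) ≤ K := by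
      rw [hK]
      have : (1:ℝ) ≤ (⌈((n : ℝ) - 1) / (s : ℝ)⌉ : ℝ) := by exact_mod_cast hcpos
      linarith
    by_cases hcase : n ≤ s * s + s + 1
    · -- K ≤ s + 2
      have hc : ⌈((n : ℝ) - 1) / (s : ℝ)⌉ ≤ (s : ℤ) + 1 := by
        rw [Int.ceil_le]
        rw [div_le_iff₀ hspos]
        push_cast
        have : (n:ℝ) ≤ (s:ℝ) * s + s + 1 := by exact_mod_cast hcase
        nlinarith
      have hKle : K ≤ (s:ℝ) + 2 := by
        rw [hK]
        have : (⌈((n : ℝ) - 1) / (s : ℝ)⌉ : ℝ) ≤ (s:ℝ) + 1 := by exact_mod_cast hc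
        linarith
      nlinarith [mul_nonneg (sub_nonneg.mpr hKle) (by linarith : (0:ℝ) ≤ K + s - 1)]
    · -- n ≥ s² + s + 2, K ≤ s + 3
      push_neg at hcase
      have hcaseR : (s:ℝ) * s + s + 2 ≤ (n:ℝ) := by exact_mod_cast hcase
      have hnub : (n:ℝ) ≤ (s:ℝ) * s + 2 * s := by
        have : n ≤ s * s + 2 * s := by nlinarith
        exact_mod_cast this
      have hc : ⌈((n : ℝ) - 1) / (s : ℝ)⌉ ≤ (s : ℤ) + 2 := by
        rw [Int.ceil_le]
        rw [div_le_iff₀ hspos]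
        push_cast
        nlinarith
      have hKle : K ≤ (s:ℝ) + 3 := by
        rw [hK]
        have : (⌈((n : ℝ) - 1) / (s : ℝ)⌉ : ℝ) ≤ (s:ℝ) + 2 := by exact_mod_cast hc
        linarith
      nlinarith [mul_nonneg (sub_nonneg.mpr hKle) (by linarith : (0:ℝ) ≤ K + s)]
end

section
/- In the LogLog-DenseNet connection graph on {0,...,L}, the distance between any two vertices is at most 2 + log2(log2(L+1)) (up to an additive constant), i.e., the maximum backpropagation distance is at most the recursion depth of lglg_conn(0,L) plus one. -/
/-- Key set of the segment `[s,t]`: `{s} ∪ {t - kδ : t - kδ ≥ s}` with `δ = ⌊√(t-s+1)⌋`. -/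
def keySet (s t : ℤ) : Finset ℤ :=
  insert s (((Finset.range (t - s + 1).toNat).image
    fun k : ℕ => t - (k : ℤ) * (Nat.sqrt (t - s + 1).toNat : ℤ)).filter (s ≤ ·))

/-- `a` and `b` are consecutive key vertices of segment `[s,t]`. -/
def consecKeys (s t a b : ℤ) : Prop :=
  a ∈ keySet s t ∧ b ∈ keySet s t ∧ a < b ∧ ∀ c ∈ keySet s t, ¬(a < c ∧ c < b)

/-- Segments appearing in the recursion tree of `lglg_conn(0, L)`. -/
inductive Seg (L : ℕ) : ℤ → ℤ → Prop where
  | root : Seg L 0 L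
  | child (s t a b : ℤ) : Seg L s t → 3 ≤ t - s + 1 → consecKeys s t a b → Seg L a b

/-- Edges of the LogLog-DenseNet connection graph on `{0,...,L}`: the initialization
edges `i → i-1`, the key cliques (a), and the edges to the preceding key vertex (b). -/
inductive LLEdge (L : ℕ) : ℤ → ℤ → Prop where
  | init (i : ℤ) : 1 ≤ i → i ≤ L → LLEdge L i (i - 1)
  | key (s t i j : ℤ) : Seg L s t → 2 ≤ t - s + 1 → i ∈ keySet s t → j ∈ keySet s t →
      j < i → LLEdge L i j
  | prev (s t a b j : ℤ) : Seg L s t → 2 ≤ t - s + 1 → consecKeys s t a b →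
      a < j → j ≤ b → LLEdge L j a

namespace LLDN

/-- δ of segment [s,t] as an integer. -/
def dl (s t : ℤ) : ℤ := (Nat.sqrt (t - s + 1).toNat : ℤ)

lemma mem_keySet {s t x : ℤ} :
    x ∈ keySet s t ↔ x = s ∨ (s ≤ x ∧ ∃ k : ℕ, k < (t - s + 1).toNat ∧ x = t - (k : ℤ) * dl s t) := by
  simp only [keySet, dl, Finset.mem_insert, Finset.mem_filter, Finset.mem_image,
    Finset.mem_range]
  tauto

lemma self_mem_keySet (s t : ℤ) : s ∈ keySet s t := by
  simp [keySet]

lemma top_mem_keySet {s t : ℤ} (h : s ≤ t) : t ∈ keySet s t := by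
  rw [mem_keySet]
  right
  exact ⟨h, 0, by omega, by simp⟩

lemma keySet_bounds {s t x : ℤ} (hx : x ∈ keySet s t) (h : s ≤ t) : s ≤ x ∧ x ≤ t := by
  rw [mem_keySet] at hx
  rcases hx with rfl | ⟨h1, k, hk, rfl⟩
  · exact ⟨le_refl _, h⟩
  · have h0 : (0:ℤ) ≤ dl s t := by unfold dl; positivity
    have : (0:ℤ) ≤ (k:ℤ) * dl s t := mul_nonneg (by positivity) h0
    omega

lemma dl_pos {s t : ℤ} (h : 2 ≤ t - s + 1) : 1 ≤ dl s t := by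
  have : 1 ≤ Nat.sqrt (t - s + 1).toNat := Nat.le_sqrt.2 (by omega)
  unfold dl; exact_mod_cast this

lemma dl_lt {s t : ℤ} (h : 2 ≤ t - s + 1) : dl s t < t - s + 1 := by
  have h2 : 1 < (t - s + 1).toNat := by omega
  have := Nat.sqrt_lt_self h2
  unfold dl; omega

lemma dl_sq_le {s t : ℤ} (h : 0 ≤ t - s + 1) : dl s t * dl s t ≤ t - s + 1 := by
  unfold dl
  rw [← Int.toNat_of_nonneg h]
  exact_mod_cast Nat.sqrt_le (t - s + 1).toNat

lemma key_step {s t a : ℤ} (hn : 2 ≤ t - s + 1) (ha : a ∈ keySet s t) (hat : a < t) :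
    ∃ c ∈ keySet s t, a < c ∧ c ≤ a + dl s t := by
  have hδ : 1 ≤ dl s t := dl_pos hn
  have hδlt : dl s t < t - s + 1 := dl_lt hn
  rw [mem_keySet] at ha
  rcases ha with rfl | ⟨hsa, k, hk, rfl⟩
  · -- a = s
    set δ := dl a t with hδdef
    set q := (t - a) / δ with hq
    set r := (t - a) % δ with hr
    have hq1 : 1 ≤ q := by
      rw [hq, Int.le_ediv_iff_mul_le (by omega)]
      omega
    have hqle : q ≤ t - a := Int.ediv_le_self _ (by omega)
    have hr0 : 0 ≤ r := Int.emod_nonneg _ (by omega)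
    have hrlt : r < δ := Int.emod_lt_of_pos _ (by omega)
    have key : δ * q + r = t - a := Int.mul_ediv_add_emod (t - a) δ
    by_cases hrz : r = 0
    · refine ⟨t - (q - 1) * δ, ?_, ?_, ?_⟩
      · rw [mem_keySet]
        right
        refine ⟨?_, (q - 1).toNat, ?_, ?_⟩
        · nlinarith
        · omega
        · rw [Int.toNat_of_nonneg (by omega)]
      · nlinarith
      · nlinarith
    · have hrpos : 0 < r := lt_of_le_of_ne hr0 (Ne.symm hrz)
      refine ⟨t - q * δ, ?_, ?_, ?_⟩
      · rw [mem_keySet]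
        right
        refine ⟨?_, q.toNat, ?_, ?_⟩
        · nlinarith
        · omega
        · rw [Int.toNat_of_nonneg (by omega)]
      · nlinarith [mul_comm q δ]
      · nlinarith [mul_comm q δ]
  · -- a = t - k * δ
    have hk1 : 1 ≤ k := by
      rcases Nat.eq_zero_or_pos k with rfl | h
      · simp at hat
      · exact h
    refine ⟨t - ((k : ℤ) - 1) * dl s t, ?_, ?_, ?_⟩
    · rw [mem_keySet]
      right
      refine ⟨?_, k - 1, ?_, ?_⟩
      · nlinarith [hsa]
      · omega
      · push_cast [Nat.cast_sub hk1]
        ring_nf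
    · nlinarith
    · nlinarith

lemma between {s t x : ℤ} (hn : 2 ≤ t - s + 1) (hsx : s ≤ x) (hxt : x ≤ t) (hx : x ∉ keySet s t) :
    ∃ a b, consecKeys s t a b ∧ a < x ∧ x < b ∧ ∀ e ∈ keySet s t, x < e → b ≤ e := by
  have hst : s ≤ t := by omega
  have hsx' : s < x := lt_of_le_of_ne hsx (by rintro rfl; exact hx (self_mem_keySet s t))
  have hxt' : x < t := lt_of_le_of_ne hxt (by rintro rfl; exact hx (top_mem_keySet hst))
  set A := (keySet s t).filter (· < x) with hAdef
  set B := (keySet s t).filter (x < ·) with hBdef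
  have hA : A.Nonempty := ⟨s, Finset.mem_filter.2 ⟨self_mem_keySet s t, hsx'⟩⟩
  have hB : B.Nonempty := ⟨t, Finset.mem_filter.2 ⟨top_mem_keySet hst, hxt'⟩⟩
  set a := A.max' hA with hadef
  set b := B.min' hB with hbdef
  have haA : a ∈ A := A.max'_mem hA
  have hbB : b ∈ B := B.min'_mem hB
  rw [hAdef, Finset.mem_filter] at haA
  rw [hBdef, Finset.mem_filter] at hbB
  refine ⟨a, b, ⟨haA.1, hbB.1, by omega, ?_⟩, haA.2, hbB.2, ?_⟩
  · rintro c hc ⟨hac, hcb⟩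
    rcases lt_trichotomy c x with h | h | h
    · have : c ≤ a := A.le_max' c (Finset.mem_filter.2 ⟨hc, h⟩)
      omega
    · exact hx (h ▸ hc)
    · have : b ≤ c := B.min'_le c (Finset.mem_filter.2 ⟨hc, h⟩)
      omega
  · intro e he hxe
    exact B.min'_le e (Finset.mem_filter.2 ⟨he, hxe⟩)

lemma consec_gap {s t a b : ℤ} (hn : 2 ≤ t - s + 1) (h : consecKeys s t a b) :
    b - a ≤ dl s t := by
  obtain ⟨ha, hb, hab, hcons⟩ := h
  have hbt := (keySet_bounds hb (by omega)).2
  have hat : a < t := lt_of_lt_of_le hab hbt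
  obtain ⟨c, hc, hac, hca⟩ := key_step hn ha hat
  by_cases hcb : c < b
  · exact absurd ⟨hac, hcb⟩ (hcons c hc)
  · omega

lemma consec_bounds {s t a b : ℤ} (hn : 2 ≤ t - s + 1) (h : consecKeys s t a b) :
    s ≤ a ∧ b ≤ t := by
  obtain ⟨ha, hb, _, _⟩ := h
  exact ⟨(keySet_bounds ha (by omega)).1, (keySet_bounds hb (by omega)).2⟩

lemma mid3 (a : ℤ) : a + 1 ∈ keySet a (a + 2) := by
  rw [mem_keySet]
  right
  refine ⟨by omega, 1, by norm_num, ?_⟩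
  have h3 : (a + 2 - a + 1).toNat = 3 := by omega
  unfold dl
  rw [h3, show Nat.sqrt 3 = 1 from (Nat.eq_sqrt.2 (by norm_num)).symm]
  push_cast
  ring

lemma stepsTo_one {α : Type*} {E : α → α → Prop} {i j : α} (h : E i j) : stepsTo E 1 i j :=
  ⟨j, h, rfl⟩

lemma stepsTo_succ {α : Type*} {E : α → α → Prop} {m : ℕ} {i k j : α} (h : E i k)
    (h2 : stepsTo E m k j) : stepsTo E (m + 1) i j := ⟨k, h, h2⟩

lemma seg_le {L : ℕ} {s t : ℤ} (h : Seg L s t) : s ≤ t := by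
  induction h with
  | root => exact_mod_cast Int.ofNat_nonneg L
  | child s t a b _ _ hc _ => exact le_of_lt hc.2.2.1

lemma pow_sq_bound (d : ℕ) : (2:ℤ) ^ 2 ^ (d + 1) + 2 ≤ (2 ^ 2 ^ d + 1) * (2 ^ 2 ^ d + 1) := by
  have h1 : (2:ℤ) ^ 2 ^ (d + 1) = 2 ^ 2 ^ d * 2 ^ 2 ^ d := by
    rw [← pow_add]
    congr 1
    omega
  have h2 : (1:ℤ) ≤ 2 ^ 2 ^ d := one_le_pow₀ (by norm_num)
  nlinarith

lemma descend (L : ℕ) : ∀ d : ℕ, ∀ s t j : ℤ, Seg L s t → s ≤ j → j < t →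
    t - s + 1 ≤ 2 ^ 2 ^ d + 2 →
    ∃ m, stepsTo (LLEdge L) m t j ∧ m ≤ d + 2 := by
  intro d
  induction d with
  | zero =>
    intro s t j hseg hsj hjt hsize
    have hn : 2 ≤ t - s + 1 := by omega
    by_cases hj : j ∈ keySet s t
    · exact ⟨1, stepsTo_one (LLEdge.key s t t j hseg hn (top_mem_keySet (by omega)) hj hjt),
        by omega⟩
    · obtain ⟨a, b, hcons, haj, hjb, hmin⟩ := between hn hsj (le_of_lt hjt) hj
      have hgap : b - a ≤ dl s t := consec_gap hn hcons
      have hba : 2 ≤ b - a := by omega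
      have hδ2 : 2 ≤ dl s t := by omega
      have hsq := dl_sq_le (s := s) (t := t) (by omega)
      have hN4 : 4 ≤ t - s + 1 := by nlinarith
      have hn4 : t - s + 1 = 4 := by norm_num at hsize; omega
      have hδle : dl s t ≤ 2 := by nlinarith
      have hb2 : b = a + 2 := by omega
      have hj1 : j = a + 1 := by omega
      have hseg' : Seg L a b := Seg.child s t a b hseg (by omega) hcons
      have hjkey : j ∈ keySet a b := by rw [hj1, hb2]; exact mid3 a
      have hbkey : b ∈ keySet a b := top_mem_keySet (by omega)
      have hedge2 : LLEdge L b j := LLEdge.key a b b j hseg' (by omega) hbkey hjkey (by omega)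
      by_cases hbt : b = t
      · exact ⟨1, stepsTo_one (hbt ▸ hedge2), by omega⟩
      · have hbt' : b < t := lt_of_le_of_ne (consec_bounds hn hcons).2 hbt
        have hedge1 : LLEdge L t b :=
          LLEdge.key s t t b hseg hn (top_mem_keySet (by omega)) hcons.2.1 hbt'
        exact ⟨2, stepsTo_succ hedge1 (stepsTo_one hedge2), by omega⟩
  | succ d ih =>
    intro s t j hseg hsj hjt hsize
    have hn : 2 ≤ t - s + 1 := by omega
    by_cases hj : j ∈ keySet s t
    · exact ⟨1, stepsTo_one (LLEdge.key s t t j hseg hn (top_mem_keySet (by omega)) hj hjt),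
        by omega⟩
    · obtain ⟨a, b, hcons, haj, hjb, hmin⟩ := between hn hsj (le_of_lt hjt) hj
      have hgap : b - a ≤ dl s t := consec_gap hn hcons
      have hba : 2 ≤ b - a := by omega
      have hδ2 : 2 ≤ dl s t := by omega
      have hsq := dl_sq_le (s := s) (t := t) (by omega)
      have hN4 : 4 ≤ t - s + 1 := by nlinarith
      have hseg' : Seg L a b := Seg.child s t a b hseg (by omega) hcons
      have hδbound : dl s t ≤ 2 ^ 2 ^ d + 1 := by
        by_contra hcon
        push_neg at hcon
        have hB : (1:ℤ) ≤ 2 ^ 2 ^ d := one_le_pow₀ (by norm_num)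
        have h2 : ((2:ℤ) ^ 2 ^ d + 2) * (2 ^ 2 ^ d + 2) ≤ dl s t * dl s t :=
          mul_le_mul (by omega) (by omega) (by omega) (by omega)
        nlinarith [h2, pow_sq_bound d]
      obtain ⟨m, hp, hm⟩ := ih a b j hseg' (by omega) hjb (by omega)
      by_cases hbt : b = t
      · exact ⟨m, hbt ▸ hp, by omega⟩
      · have hbt' : b < t := lt_of_le_of_ne (consec_bounds hn hcons).2 hbt
        have hedge1 : LLEdge L t b :=
          LLEdge.key s t t b hseg hn (top_mem_keySet (by omega)) hcons.2.1 hbt'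
        exact ⟨m + 1, stepsTo_succ hedge1 hp, by omega⟩

lemma fromKey (L d : ℕ) {s t a j : ℤ} (hseg : Seg L s t) (hsize : t - s + 1 ≤ 2 ^ 2 ^ d + 2)
    (ha : a ∈ keySet s t) (hsj : s ≤ j) (hja : j < a) :
    ∃ m, stepsTo (LLEdge L) m a j ∧ m ≤ d + 3 := by
  have hst : s ≤ t := seg_le hseg
  have hat : a ≤ t := (keySet_bounds ha hst).2
  have hn : 2 ≤ t - s + 1 := by omega
  by_cases hj : j ∈ keySet s t
  · exact ⟨1, stepsTo_one (LLEdge.key s t a j hseg hn ha hj hja), by omega⟩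
  · obtain ⟨c, b, hcons, hcj, hjb, hmin⟩ := between hn hsj (by omega) hj
    have hbla : b ≤ a := hmin a ha hja
    have hgap : b - c ≤ dl s t := consec_gap hn hcons
    have hbc : 2 ≤ b - c := by omega
    have hδ2 : 2 ≤ dl s t := by omega
    have hsq := dl_sq_le (s := s) (t := t) (by omega)
    have hN4 : 4 ≤ t - s + 1 := by nlinarith
    have hseg' : Seg L c b := Seg.child s t c b hseg (by omega) hcons
    have hδn : dl s t < t - s + 1 := dl_lt hn
    obtain ⟨m, hp, hm⟩ := descend L d c b j hseg' (by omega) hjb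
      (le_trans (by omega) hsize)
    by_cases hba : b = a
    · exact ⟨m, hba ▸ hp, by omega⟩
    · have hba' : b < a := lt_of_le_of_ne hbla hba
      have hedge : LLEdge L a b := LLEdge.key s t a b hseg hn ha hcons.2.1 hba'
      exact ⟨m + 1, stepsTo_succ hedge hp, by omega⟩

lemma main (L d : ℕ) : ∀ fuel : ℕ, ∀ s t i j : ℤ, Seg L s t → (t - s + 1).toNat ≤ fuel →
    t - s + 1 ≤ 2 ^ 2 ^ d + 2 → s ≤ j → j < i → i ≤ t →
    ∃ m, stepsTo (LLEdge L) m i j ∧ m ≤ d + 4 := by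
  intro fuel
  induction fuel with
  | zero =>
    intro s t i j _ hfuel _ hsj hji hit
    omega
  | succ f ih =>
    intro s t i j hseg hfuel hsize hsj hji hit
    have hn : 2 ≤ t - s + 1 := by omega
    by_cases hi : i ∈ keySet s t
    · obtain ⟨m, hp, hm⟩ := fromKey L d hseg hsize hi hsj hji
      exact ⟨m, hp, by omega⟩
    · obtain ⟨a, b, hcons, hai, hib, hmin⟩ := between hn (by omega) hit hi
      have hprev : LLEdge L i a := LLEdge.prev s t a b i hseg hn hcons hai (by omega)
      rcases lt_trichotomy j a with hja | rfl | haj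
      · obtain ⟨m, hp, hm⟩ := fromKey L d hseg hsize hcons.1 hsj hja
        exact ⟨m + 1, stepsTo_succ hprev hp, by omega⟩
      · exact ⟨1, stepsTo_one hprev, by omega⟩
      · have hba : 3 ≤ b - a := by omega
        have hgap := consec_gap hn hcons
        have hδ : 3 ≤ dl s t := by omega
        have hsq := dl_sq_le (s := s) (t := t) (by omega)
        have hseg' : Seg L a b := Seg.child s t a b hseg (by nlinarith) hcons
        have hchild : b - a + 1 < t - s + 1 := by nlinarith
        exact ih a b i j hseg' (by omega) (le_trans (by omega) hsize)
          (le_of_lt haj) hji (le_of_lt hib)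

end LLDN

/-- In the LogLog-DenseNet graph on `{0,...,L}`, the distance between any two vertices is
at most `2 + log₂ log₂ (L+1)` up to an additive constant. -/
theorem stmt12 : ∃ C : ℝ, ∀ L : ℕ, 2 ≤ L → ∀ i j : ℤ, 0 ≤ j → j < i → i ≤ L →
    ∃ m : ℕ, stepsTo (LLEdge L) m i j ∧
      (m : ℝ) ≤ 2 + Real.logb 2 (Real.logb 2 ((L : ℝ) + 1)) + C := by
  refine ⟨4, ?_⟩
  intro L hL i j hj hji hiL
  set c1 := Nat.clog 2 (L + 1) with hc1def
  set d := Nat.clog 2 c1 with hddef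
  have hc1ge : 2 ≤ c1 := by
    have := (Nat.lt_clog_iff_pow_lt (by norm_num : 1 < 2)).2 (show 2 ^ 1 < L + 1 by omega)
    omega
  have hd1 : 1 ≤ d := by
    have := (Nat.lt_clog_iff_pow_lt (by norm_num : 1 < 2)).2 (show 2 ^ 0 < c1 by omega)
    omega
  have hsizeN : L + 1 ≤ 2 ^ 2 ^ d := by
    calc L + 1 ≤ 2 ^ c1 := Nat.le_pow_clog (by norm_num) _
    _ ≤ 2 ^ 2 ^ d := Nat.pow_le_pow_right (by norm_num) (Nat.le_pow_clog (by norm_num) _)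
  have hsize : (L : ℤ) - 0 + 1 ≤ 2 ^ 2 ^ d + 2 := by
    have h : ((L + 1 : ℕ) : ℤ) ≤ ((2 ^ 2 ^ d : ℕ) : ℤ) := by exact_mod_cast hsizeN
    push_cast at h
    linarith
  obtain ⟨m, hp, hm⟩ := LLDN.main L d ((L : ℤ) - 0 + 1).toNat 0 (L : ℤ) i j Seg.root
    le_rfl hsize hj hji hiL
  refine ⟨m, hp, ?_⟩
  have hL2 : (2 : ℝ) ≤ (L : ℝ) := by exact_mod_cast hL
  set x := Real.logb 2 ((L : ℝ) + 1) with hxdef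
  have hx1 : 1 ≤ x := by
    rw [hxdef]
    calc (1 : ℝ) = Real.logb 2 2 := (Real.logb_self_eq_one (by norm_num)).symm
    _ ≤ _ := Real.logb_le_logb_of_le (by norm_num) (by norm_num) (by linarith)
  have hA : (c1 : ℝ) ≤ x + 1 := by
    have h1 : 2 ^ (c1 - 1) < L + 1 := Nat.pow_pred_clog_lt_self (by norm_num) (by omega)
    have h2 : ((2 : ℝ)) ^ (c1 - 1) < (L : ℝ) + 1 := by exact_mod_cast h1
    have h3 : Real.logb 2 ((2 : ℝ) ^ (c1 - 1)) < x :=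
      Real.logb_lt_logb (by norm_num) (by positivity) h2
    rw [Real.logb_pow, Real.logb_self_eq_one (by norm_num), mul_one] at h3
    have hc : ((c1 - 1 : ℕ) : ℝ) = (c1 : ℝ) - 1 := by
      push_cast [Nat.cast_sub (show 1 ≤ c1 by omega)]
      ring
    linarith
  have hxpos : (0 : ℝ) < x + 1 := by linarith
  have hB : (d : ℝ) ≤ Real.logb 2 (x + 1) + 1 := by
    have h1 : 2 ^ (d - 1) < c1 := Nat.pow_pred_clog_lt_self (by norm_num) (by omega)
    have h2 : ((2 : ℝ)) ^ (d - 1) < (c1 : ℝ) := by exact_mod_cast h1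
    have h3 : Real.logb 2 ((2 : ℝ) ^ (d - 1)) < Real.logb 2 (x + 1) :=
      lt_of_lt_of_le (Real.logb_lt_logb (by norm_num) (by positivity) h2)
        (Real.logb_le_logb_of_le (by norm_num) (by positivity) hA)
    rw [Real.logb_pow, Real.logb_self_eq_one (by norm_num), mul_one] at h3
    have hc : ((d - 1 : ℕ) : ℝ) = (d : ℝ) - 1 := by
      push_cast [Nat.cast_sub hd1]
      ring
    linarith
  have hC : Real.logb 2 (x + 1) ≤ 1 + Real.logb 2 x := by
    have hx2 : x + 1 ≤ 2 * x := by linarith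
    calc Real.logb 2 (x + 1) ≤ Real.logb 2 (2 * x) :=
          Real.logb_le_logb_of_le (by norm_num) (by linarith) hx2
    _ = Real.logb 2 2 + Real.logb 2 x := Real.logb_mul (by norm_num) (by linarith)
    _ = 1 + Real.logb 2 x := by rw [Real.logb_self_eq_one (by norm_num)]
  have hmle : (m : ℝ) ≤ (d : ℝ) + 4 := by exact_mod_cast hm
  linarith
end

section
/- The total number of connections in LogLog-DenseNet of depth L is at most 1.5·L·log2 log2 L + o(L log log L). -/
namespace LLD

def childPairs (s t : ℤ) : Finset (ℤ × ℤ) :=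
  ((keySet s t) ×ˢ (keySet s t)).filter
    (fun p => p.1 < p.2 ∧ ∀ c ∈ keySet s t, ¬(p.1 < c ∧ c < p.2))

lemma mem_childPairs {s t a b : ℤ} :
    (a, b) ∈ childPairs s t ↔ consecKeys s t a b := by
  simp only [childPairs, Finset.mem_filter, Finset.mem_product, consecKeys]
  tauto

lemma left_mem_keySet (s t : ℤ) : s ∈ keySet s t := Finset.mem_insert_self _ _

lemma keySet_le {s t x : ℤ} (hx : x ∈ keySet s t) : s ≤ x := by
  rcases Finset.mem_insert.1 hx with h | h
  · exact h.ge
  · exact (Finset.mem_filter.1 h).2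

lemma keySet_le_right {s t x : ℤ} (hst : s ≤ t) (hx : x ∈ keySet s t) : x ≤ t := by
  rcases Finset.mem_insert.1 hx with h | h
  · exact h.le.trans hst
  · rcases Finset.mem_image.1 (Finset.mem_filter.1 h).1 with ⟨k, _, rfl⟩
    have : (0:ℤ) ≤ (k : ℤ) * (Nat.sqrt (t - s + 1).toNat : ℤ) := by positivity
    omega

lemma right_mem_keySet {s t : ℤ} (hst : s ≤ t) : t ∈ keySet s t := by
  refine Finset.mem_insert.2 (Or.inr (Finset.mem_filter.2 ⟨Finset.mem_image.2 ⟨0, ?_, by simp⟩, by simpa using hst⟩))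
  simp only [Finset.mem_range]
  omega

/-- consecutive keys are at distance at most `⌊√n⌋`. -/
lemma consec_gap {s t a b : ℤ} (h2 : 2 ≤ t - s + 1) (hc : consecKeys s t a b) :
    b - a ≤ (Nat.sqrt (t - s + 1).toNat : ℤ) := by
  obtain ⟨ha, hb, hab, hmax⟩ := hc
  set n : ℕ := (t - s + 1).toNat with hn
  have hnn : (n : ℤ) = t - s + 1 := by omega
  set δ : ℤ := (Nat.sqrt n : ℤ) with hδ
  have hδ1 : 1 ≤ δ := by
    have : 0 < Nat.sqrt n := Nat.sqrt_pos.2 (by omega)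
    omega
  have has : s ≤ a := keySet_le ha
  -- b is not s
  have hbs : b ≠ s := by omega
  have hb' : b ∈ (((Finset.range n).image
      fun k : ℕ => t - (k : ℤ) * δ).filter (s ≤ ·)) := by
    rcases Finset.mem_insert.1 hb with h | h
    · exact absurd h hbs
    · exact h
  rcases Finset.mem_filter.1 hb' with ⟨him, hsb⟩
  rcases Finset.mem_image.1 him with ⟨k, hk, hbk⟩
  by_cases hcase : s ≤ b - δ
  · -- b - δ is a key
    have hkey : b - δ ∈ keySet s t := by
      refine Finset.mem_insert.2 (Or.inr (Finset.mem_filter.2 ⟨Finset.mem_image.2 ⟨k+1, ?_, ?_⟩, by simpa using hcase⟩))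
      · simp only [Finset.mem_range]
        have h1 : ((k:ℤ)+1) * δ = t - (b - δ) := by rw [← hbk]; ring
        have h2 : ((k:ℤ)+1) * δ ≤ t - s := by omega
        have h3 : (k:ℤ) + 1 ≤ ((k:ℤ)+1) * δ := by nlinarith
        omega
      · push_cast
        rw [← hbk]; ring
    have := hmax _ hkey
    omega
  · omega

lemma consec_pos {s t a b : ℤ} (hc : consecKeys s t a b) : 1 ≤ b - a := by
  have := hc.2.2.1; omega

/-- uniqueness of the consecutive pair containing a point. -/
lemma consec_unique {s t a b a' b' x : ℤ} (h : consecKeys s t a b) (h' : consecKeys s t a' b')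
    (h1 : a < x) (h2 : x ≤ b) (h1' : a' < x) (h2' : x ≤ b') : a = a' ∧ b = b' := by
  obtain ⟨ha, hb, hab, hmax⟩ := h
  obtain ⟨ha', hb', hab', hmax'⟩ := h'
  have haa : a = a' := by
    rcases lt_trichotomy a a' with hlt | heq | hgt
    · exact absurd ⟨hlt, by omega⟩ (hmax _ ha')
    · exact heq
    · exact absurd ⟨hgt, by omega⟩ (hmax' _ ha)
  subst haa
  constructor
  · rfl
  · rcases lt_trichotomy b b' with hlt | heq | hgt
    · exact absurd ⟨by omega, hlt⟩ (hmax' _ hb)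
    · exact heq
    · exact absurd ⟨by omega, hgt⟩ (hmax _ hb')

lemma card_keySet_le {s t : ℤ} (h1 : 1 ≤ t - s + 1) :
    (keySet s t).card ≤ Nat.sqrt (t - s + 1).toNat + 3 := by
  set n : ℕ := (t - s + 1).toNat with hn
  have hnn : (n : ℤ) = t - s + 1 := by omega
  set d : ℕ := Nat.sqrt n with hd
  have hd1 : 1 ≤ d := Nat.sqrt_pos.2 (by omega)
  have hsub : keySet s t ⊆ insert s ((Finset.range (d + 2)).image
      fun k : ℕ => t - (k : ℤ) * (d : ℤ)) := by
    intro x hx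
    rcases Finset.mem_insert.1 hx with h | h
    · simp [h]
    · rcases Finset.mem_filter.1 h with ⟨him, hsx⟩
      rcases Finset.mem_image.1 him with ⟨k, hk, rfl⟩
      refine Finset.mem_insert.2 (Or.inr (Finset.mem_image.2 ⟨k, ?_, rfl⟩))
      simp only [Finset.mem_range]
      have hsx' : s ≤ t - (k:ℤ) * (d:ℤ) := hsx
      have hkd : (k : ℤ) * d ≤ t - s := by omega
      have hub : n ≤ d * d + 2 * d := by
        have := Nat.lt_succ_sqrt n
        nlinarith [Nat.lt_succ_sqrt n]
      by_contra hcon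
      push_neg at hcon
      have : d + 2 ≤ k := hcon
      have : ((d:ℤ) + 2) * d ≤ (k:ℤ) * d := by
        have : ((d:ℤ) + 2) ≤ (k:ℤ) := by exact_mod_cast this
        nlinarith
      have : ((d:ℤ)+2) * d ≤ t - s := le_trans this hkd
      have hnd : (t:ℤ) - s ≤ (d:ℤ)*d + 2*d - 1 := by
        have : (n:ℤ) ≤ (d:ℤ) * d + 2 * d := by exact_mod_cast hub
        omega
      nlinarith
  calc (keySet s t).card ≤ _ := Finset.card_le_card hsub
    _ ≤ ((Finset.range (d+2)).image fun k : ℕ => t - (k : ℤ) * (d : ℤ)).card + 1 :=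
        Finset.card_insert_le _ _
    _ ≤ (d + 2) + 1 := by
        have := Finset.card_image_le (s := Finset.range (d+2)) (f := fun k : ℕ => t - (k : ℤ) * (d : ℤ))
        simpa using this
    _ = d + 3 := by ring


def keyEdges (s t : ℤ) : Finset (ℤ × ℤ) :=
  ((keySet s t) ×ˢ (keySet s t)).filter (fun p => p.2 < p.1)

noncomputable def prevEdges (s t : ℤ) : Finset (ℤ × ℤ) :=
  (childPairs s t).biUnion (fun p => (Finset.Ioc p.1 p.2).image (fun x => (x, p.1)))

lemma sqrt_le_sub_two {n : ℕ} (h : 3 ≤ n) : Nat.sqrt n ≤ n - 2 := by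
  have h1 : Nat.sqrt n < n - 1 := by
    rw [Nat.sqrt_lt']
    rcases Nat.exists_eq_add_of_le h with ⟨k, rfl⟩
    have h2 : 3 + k - 1 = k + 2 := by omega
    rw [h2]
    nlinarith
  omega

lemma child_lt {s t a b : ℤ} (h3 : 3 ≤ t - s + 1) (h : (a, b) ∈ childPairs s t) :
    (b - a).toNat < (t - s).toNat := by
  have hc := mem_childPairs.1 h
  have hgap := consec_gap (by omega) hc
  have hpos := consec_pos hc
  have h3' : 3 ≤ (t - s + 1).toNat := by omega
  have := sqrt_le_sub_two h3'
  omega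

noncomputable def F (s t : ℤ) : Finset (ℤ × ℤ) :=
  keyEdges s t ∪ prevEdges s t ∪
    (if h : 3 ≤ t - s + 1 then
      (childPairs s t).attach.biUnion (fun p => F p.1.1 p.1.2)
     else ∅)
termination_by (t - s).toNat
decreasing_by
  exact child_lt h (by rw [Prod.mk.eta]; exact p.2)

lemma keyEdges_subset_F (s t : ℤ) : keyEdges s t ⊆ F s t := by
  rw [F]; intro x hx; exact Finset.mem_union_left _ (Finset.mem_union_left _ hx)

lemma prevEdges_subset_F (s t : ℤ) : prevEdges s t ⊆ F s t := by
  rw [F]; intro x hx; exact Finset.mem_union_left _ (Finset.mem_union_right _ hx)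

lemma child_F_subset {s t a b : ℤ} (h3 : 3 ≤ t - s + 1) (h : (a, b) ∈ childPairs s t) :
    F a b ⊆ F s t := by
  intro x hx
  rw [F]
  refine Finset.mem_union_right _ ?_
  rw [dif_pos h3]
  exact Finset.mem_biUnion.2 ⟨⟨(a,b), h⟩, Finset.mem_attach _ _, hx⟩


noncomputable def initEdges (L : ℕ) : Finset (ℤ × ℤ) :=
  (Finset.Icc (1:ℤ) L).image (fun i => (i, i - 1))

lemma Seg_F_subset {L : ℕ} {s t : ℤ} (h : Seg L s t) : F s t ⊆ F 0 L := by
  induction h with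
  | root => exact subset_rfl
  | child s t a b _ h3 hc ih => exact (child_F_subset h3 (mem_childPairs.2 hc)).trans ih

lemma LLEdge_mem {L : ℕ} {i j : ℤ} (h : LLEdge L i j) :
    (i, j) ∈ F 0 L ∪ initEdges L := by
  induction h with
  | init i h1 h2 =>
      exact Finset.mem_union_right _ (Finset.mem_image.2 ⟨i, Finset.mem_Icc.2 ⟨h1, h2⟩, rfl⟩)
  | key s t i j hseg _ hi hj hij =>
      refine Finset.mem_union_left _ (Seg_F_subset hseg (keyEdges_subset_F s t ?_))
      exact Finset.mem_filter.2 ⟨Finset.mem_product.2 ⟨hi, hj⟩, hij⟩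
  | prev s t a b j hseg _ hc h1 h2 =>
      refine Finset.mem_union_left _ (Seg_F_subset hseg (prevEdges_subset_F s t ?_))
      exact Finset.mem_biUnion.2 ⟨(a, b), mem_childPairs.2 hc,
        Finset.mem_image.2 ⟨j, Finset.mem_Ioc.2 ⟨h1, h2⟩, rfl⟩⟩


lemma consec_of_mem {s t : ℤ} {p : ℤ × ℤ} (h : p ∈ childPairs s t) :
    consecKeys s t p.1 p.2 := by
  refine mem_childPairs.1 ?_
  rwa [Prod.mk.eta]

lemma keySet_of_lt {s t : ℤ} (h : t < s) : keySet s t = {s} := by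
  ext x
  simp only [keySet, Finset.mem_insert, Finset.mem_filter, Finset.mem_image,
    Finset.mem_range, Finset.mem_singleton]
  constructor
  · rintro (rfl | ⟨⟨k, hk, rfl⟩, hs⟩)
    · rfl
    · exfalso; omega
  · rintro rfl; exact Or.inl rfl

lemma two_mul_card_keyEdges (s t : ℤ) :
    2 * (keyEdges s t).card ≤ (keySet s t).card * (keySet s t).card := by
  classical
  set K := keySet s t
  set S := keyEdges s t with hS
  set S' := (K ×ˢ K).filter (fun p => p.1 < p.2) with hS'
  have himg : S.image Prod.swap = S' := by
    ext p
    simp only [Finset.mem_image, hS, hS', keyEdges, Finset.mem_filter, Finset.mem_product]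
    constructor
    · rintro ⟨q, ⟨⟨h1, h2⟩, h3⟩, rfl⟩
      exact ⟨⟨h2, h1⟩, h3⟩
    · rintro ⟨⟨h1, h2⟩, h3⟩
      exact ⟨p.swap, ⟨⟨h2, h1⟩, h3⟩, by simp⟩
  have hcard : S.card = S'.card := by
    rw [← himg]
    exact (Finset.card_image_of_injective _ Prod.swap_injective).symm
  have hdisj : Disjoint S S' := by
    rw [Finset.disjoint_left]
    intro p hp hp'
    have h1 := (Finset.mem_filter.1 hp).2
    have h2 := (Finset.mem_filter.1 hp').2
    exact absurd (h1.trans h2) (lt_irrefl _)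
  have hsub : S ∪ S' ⊆ K ×ˢ K := by
    intro p hp
    rcases Finset.mem_union.1 hp with h | h
    · exact Finset.filter_subset _ _ h
    · exact Finset.filter_subset _ _ h
  calc 2 * S.card = S.card + S'.card := by omega
    _ = (S ∪ S').card := (Finset.card_union_of_disjoint hdisj).symm
    _ ≤ (K ×ˢ K).card := Finset.card_le_card hsub
    _ = K.card * K.card := Finset.card_product _ _

lemma card_prevEdges (s t : ℤ) (hst : s ≤ t) : (prevEdges s t).card ≤ (t - s).toNat := by
  classical
  have h1 : (prevEdges s t).card ≤ (Finset.Ioc s t).card := by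
    apply Finset.card_le_card_of_injOn Prod.fst
    · intro p hp
      rcases Finset.mem_biUnion.1 hp with ⟨q, hq, hmem⟩
      rcases Finset.mem_image.1 hmem with ⟨x, hx, rfl⟩
      have hc := consec_of_mem hq
      have hx' := Finset.mem_Ioc.1 hx
      have h1 := keySet_le hc.1
      have h2 := keySet_le_right hst hc.2.1
      exact Finset.mem_Ioc.2 ⟨by omega, by omega⟩
    · intro p hp p' hp' hfst
      rcases Finset.mem_biUnion.1 hp with ⟨q, hq, hmem⟩
      rcases Finset.mem_image.1 hmem with ⟨x, hx, rfl⟩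
      rcases Finset.mem_biUnion.1 hp' with ⟨q', hq', hmem'⟩
      rcases Finset.mem_image.1 hmem' with ⟨x', hx', rfl⟩
      have hc := consec_of_mem hq
      have hc' := consec_of_mem hq'
      simp only at hfst
      subst hfst
      have hx1 := Finset.mem_Ioc.1 hx
      have hx1' := Finset.mem_Ioc.1 hx'
      have := consec_unique hc hc' hx1.1 hx1.2 hx1'.1 hx1'.2
      simp [this.1]
  rwa [Int.card_Ioc] at h1

lemma sum_childPairs (s t : ℤ) (hst : s ≤ t) :
    ∑ p ∈ childPairs s t, (p.2 - p.1).toNat ≤ (t - s).toNat := by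
  classical
  have hdisj : ∀ p ∈ childPairs s t, ∀ q ∈ childPairs s t, p ≠ q →
      Disjoint (Finset.Ioc p.1 p.2) (Finset.Ioc q.1 q.2) := by
    intro p hp q hq hne
    rw [Finset.disjoint_left]
    intro x hx hx'
    have hc := consec_of_mem hp
    have hc' := consec_of_mem hq
    have hx1 := Finset.mem_Ioc.1 hx
    have hx1' := Finset.mem_Ioc.1 hx'
    have := consec_unique hc hc' hx1.1 hx1.2 hx1'.1 hx1'.2
    exact hne (Prod.ext this.1 this.2)
  have hsum : ∑ p ∈ childPairs s t, (Finset.Ioc p.1 p.2).card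
      = ((childPairs s t).biUnion (fun p => Finset.Ioc p.1 p.2)).card :=
    (Finset.card_biUnion hdisj).symm
  have hsub : (childPairs s t).biUnion (fun p => Finset.Ioc p.1 p.2) ⊆ Finset.Ioc s t := by
    intro x hx
    rcases Finset.mem_biUnion.1 hx with ⟨p, hp, hmem⟩
    have hc := consec_of_mem hp
    have h1 := keySet_le hc.1
    have h2 := keySet_le_right hst hc.2.1
    have := Finset.mem_Ioc.1 hmem
    exact Finset.mem_Ioc.2 ⟨by omega, by omega⟩
  calc ∑ p ∈ childPairs s t, (p.2 - p.1).toNat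
      = ∑ p ∈ childPairs s t, (Finset.Ioc p.1 p.2).card := by
        apply Finset.sum_congr rfl; intro p _; rw [Int.card_Ioc]
    _ ≤ (Finset.Ioc s t).card := hsum ▸ Finset.card_le_card hsub
    _ = (t - s).toNat := Int.card_Ioc s t

lemma F_subset_Icc : ∀ (m : ℕ) (s t : ℤ), (t - s).toNat ≤ m →
    F s t ⊆ (Finset.Icc s t) ×ˢ (Finset.Icc s t) := by
  intro m
  induction m using Nat.strong_induction_on with
  | _ m ih =>
    intro s t hm
    intro p hp
    rw [F] at hp
    by_cases hst : s ≤ t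
    · 
      have hKsub : keySet s t ⊆ Finset.Icc s t := fun x hx =>
        Finset.mem_Icc.2 ⟨keySet_le hx, keySet_le_right hst hx⟩
      rcases Finset.mem_union.1 hp with hp | hp
      · rcases Finset.mem_union.1 hp with hp | hp
        · rcases Finset.mem_product.1 (Finset.filter_subset _ _ hp) with ⟨h1, h2⟩
          exact Finset.mem_product.2 ⟨hKsub h1, hKsub h2⟩
        · rcases Finset.mem_biUnion.1 hp with ⟨q, hq, hmem⟩
          rcases Finset.mem_image.1 hmem with ⟨x, hx, rfl⟩
          have hc := consec_of_mem hq
          have h1 := keySet_le hc.1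
          have h2 := keySet_le_right hst hc.2.1
          have hx1 := Finset.mem_Ioc.1 hx
          exact Finset.mem_product.2 ⟨Finset.mem_Icc.2 ⟨by omega, by omega⟩,
            Finset.mem_Icc.2 ⟨by omega, by omega⟩⟩
      · by_cases h3 : 3 ≤ t - s + 1
        · rw [dif_pos h3] at hp
          rcases Finset.mem_biUnion.1 hp with ⟨⟨q, hq⟩, _, hmem⟩
          have hc := consec_of_mem hq
          have h1 := keySet_le hc.1
          have h2 := keySet_le_right hst hc.2.1
          have hlt := child_lt h3 (by rw [Prod.mk.eta]; exact hq)
          have hsub := ih _ (by omega) q.1 q.2 (le_refl _)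
          have := hsub hmem
          rcases Finset.mem_product.1 this with ⟨ha, hb⟩
          have ha' := Finset.mem_Icc.1 ha
          have hb' := Finset.mem_Icc.1 hb
          have hab := hc.2.2.1
          exact Finset.mem_product.2 ⟨Finset.mem_Icc.2 ⟨by omega, by omega⟩,
            Finset.mem_Icc.2 ⟨by omega, by omega⟩⟩
        · rw [dif_neg h3] at hp
          exact absurd hp (Finset.notMem_empty _)
    · exfalso
      push_neg at hst
      have hK : keySet s t = {s} := keySet_of_lt hst
      rcases Finset.mem_union.1 hp with hp | hp
      · rcases Finset.mem_union.1 hp with hp | hp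
        · rcases Finset.mem_filter.1 hp with ⟨hmem, hlt⟩
          rcases Finset.mem_product.1 hmem with ⟨h1, h2⟩
          rw [hK] at h1 h2
          simp only [Finset.mem_singleton] at h1 h2
          omega
        · rcases Finset.mem_biUnion.1 hp with ⟨q, hq, _⟩
          have hc := consec_of_mem hq
          have h1 := hc.1; have h2 := hc.2.1
          rw [hK] at h1 h2
          simp only [Finset.mem_singleton] at h1 h2
          have := hc.2.2.1
          omega
      · rw [dif_neg (by omega)] at hp
        exact absurd hp (Finset.notMem_empty _)

lemma F_card_le_sq (s t : ℤ) : (F s t).card ≤ ((t - s).toNat + 1) ^ 2 := by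
  calc (F s t).card ≤ ((Finset.Icc s t) ×ˢ (Finset.Icc s t)).card :=
      Finset.card_le_card (F_subset_Icc _ s t (le_refl _))
    _ ≤ ((t - s).toNat + 1) ^ 2 := by
      rw [Finset.card_product, Int.card_Icc, pow_two]
      have h : (t + 1 - s).toNat ≤ (t - s).toNat + 1 := by omega
      exact Nat.mul_le_mul h h


noncomputable def g (m : ℕ) : ℝ :=
  Real.logb 2 (Real.logb 2 ((m:ℝ)+1)) + 11020 - 20 / Real.logb 2 ((m:ℝ)+1)

lemma logb_mono {x y : ℝ} (hx : 0 < x) (hxy : x ≤ y) : Real.logb 2 x ≤ Real.logb 2 y :=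
  Real.logb_le_logb_of_le (by norm_num) hx hxy

lemma one_le_logb {x : ℝ} (hx : 2 ≤ x) : 1 ≤ Real.logb 2 x := by
  have h := logb_mono (by norm_num) hx
  rwa [Real.logb_self_eq_one (by norm_num)] at h

lemma logb_m1 {m : ℕ} (hm : 1 ≤ m) : 1 ≤ Real.logb 2 ((m:ℝ)+1) := by
  apply one_le_logb
  have : (1:ℝ) ≤ (m:ℝ) := by exact_mod_cast hm
  linarith

lemma g_nonneg {m : ℕ} (hm : 1 ≤ m) : 0 ≤ g m := by
  have h1 := logb_m1 hm
  have h2 : 0 ≤ Real.logb 2 (Real.logb 2 ((m:ℝ)+1)) := Real.logb_nonneg (by norm_num) h1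
  have h3 : 20 / Real.logb 2 ((m:ℝ)+1) ≤ 20 := by
    rw [div_le_iff₀ (by linarith)]
    nlinarith
  unfold g
  linarith

lemma g_mono {m m' : ℕ} (hm : 1 ≤ m) (h : m ≤ m') : g m ≤ g m' := by
  have h1 := logb_m1 hm
  have h1' := logb_m1 (le_trans hm h)
  have hle : Real.logb 2 ((m:ℝ)+1) ≤ Real.logb 2 ((m':ℝ)+1) := by
    apply logb_mono (by positivity)
    have : (m:ℝ) ≤ (m':ℝ) := by exact_mod_cast h
    linarith
  have h2 : Real.logb 2 (Real.logb 2 ((m:ℝ)+1)) ≤ Real.logb 2 (Real.logb 2 ((m':ℝ)+1)) :=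
    logb_mono (by linarith) hle
  have h3 : 20 / Real.logb 2 ((m':ℝ)+1) ≤ 20 / Real.logb 2 ((m:ℝ)+1) := by
    apply div_le_div_of_nonneg_left (by norm_num) (by linarith) hle
  unfold g
  linarith

lemma small_case {m : ℕ} (h1 : 1 ≤ m) (h2 : m ≤ 4095) :
    ((m:ℝ)+1)^2 ≤ 1.5 * m * g m := by
  have hb := logb_m1 h1
  have hψ : 0 ≤ Real.logb 2 (Real.logb 2 ((m:ℝ)+1)) := Real.logb_nonneg (by norm_num) hb
  have h3 : 20 / Real.logb 2 ((m:ℝ)+1) ≤ 20 := by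
    rw [div_le_iff₀ (by linarith)]
    nlinarith
  have hg : 11000 ≤ g m := by unfold g; linarith
  have hm1 : (1:ℝ) ≤ (m:ℝ) := by exact_mod_cast h1
  have hm2 : (m:ℝ) ≤ 4095 := by exact_mod_cast h2
  have hgnn : 0 ≤ g m := by linarith
  calc ((m:ℝ)+1)^2 ≤ 4 * (m:ℝ)^2 := by nlinarith
    _ ≤ 1.5 * (m:ℝ) * 11000 := by nlinarith
    _ ≤ 1.5 * (m:ℝ) * g m :=
        mul_le_mul_of_nonneg_left hg (by positivity)

lemma log_two_ge : (2:ℝ)/3 ≤ Real.log 2 := by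
  have := Real.log_two_gt_d9
  linarith

set_option maxHeartbeats 1000000 in
/-- the key analytic step -/
lemma big_step {m : ℕ} (hm : 4096 ≤ m) :
    ((Nat.sqrt (m+1) : ℝ) + 3)^2 / 2 + m + 1.5 * m * g (Nat.sqrt (m+1))
      ≤ 1.5 * m * g m := by
  set d : ℕ := Nat.sqrt (m+1) with hd
  set R : ℝ := Real.sqrt ((m:ℝ)+1) with hR
  set Q : ℝ := Real.sqrt R with hQ
  have hn0 : (0:ℝ) ≤ (m:ℝ)+1 := by positivity
  have hR0 : 0 ≤ R := Real.sqrt_nonneg _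
  have hRsq : R^2 = (m:ℝ)+1 := Real.sq_sqrt hn0
  have hQsq : Q^2 = R := Real.sq_sqrt hR0
  -- f10 : 8 ≤ Q
  have hR64 : 64 ≤ R := by
    rw [hR]
    have : (64:ℝ) = Real.sqrt 4096 := by
      rw [show (4096:ℝ) = 64^2 by norm_num, Real.sqrt_sq (by norm_num)]
    rw [this]
    apply Real.sqrt_le_sqrt
    have : (4096:ℝ) ≤ (m:ℝ) := by exact_mod_cast hm
    linarith
  have hQ8 : 8 ≤ Q := by
    rw [hQ]
    have : (8:ℝ) = Real.sqrt 64 := by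
      rw [show (64:ℝ) = 8^2 by norm_num, Real.sqrt_sq (by norm_num)]
    rw [this]
    exact Real.sqrt_le_sqrt hR64
  have hQ0 : 0 < Q := by linarith
  -- f1 : (d:ℝ) ≤ R
  have hdR : (d:ℝ) ≤ R := by
    rw [hR]
    rw [show ((m:ℝ)+1) = ((m+1 : ℕ) : ℝ) by push_cast; ring]
    exact_mod_cast Real.nat_sqrt_le_real_sqrt
  -- f2 : R ≤ (d:ℝ)+1
  have hRd : R ≤ (d:ℝ)+1 := by
    rw [hR]
    have h1 : ((m:ℝ)+1) ≤ ((d:ℝ)+1)^2 := by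
      have := Nat.lt_succ_sqrt (m+1)
      have : ((m+1 : ℕ) : ℝ) ≤ (((d+1) * (d+1) : ℕ) : ℝ) := by
        exact_mod_cast Nat.le_of_lt (by rw [hd]; simpa [Nat.succ_eq_add_one, mul_comm] using this)
      push_cast at this
      nlinarith
    calc Real.sqrt ((m:ℝ)+1) ≤ Real.sqrt (((d:ℝ)+1)^2) := Real.sqrt_le_sqrt h1
      _ = (d:ℝ)+1 := Real.sqrt_sq (by positivity)
  set L2 : ℝ := Real.logb 2 ((m:ℝ)+1) with hL2
  set q : ℝ := Real.logb 2 ((d:ℝ)+1) with hq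
  -- f3 : 12 ≤ L2
  have hL2_12 : 12 ≤ L2 := by
    rw [hL2]
    have h1 : (4096:ℝ) ≤ (m:ℝ)+1 := by
      have : (4096:ℝ) ≤ (m:ℝ) := by exact_mod_cast hm
      linarith
    have h2 : Real.logb 2 (4096:ℝ) ≤ Real.logb 2 ((m:ℝ)+1) :=
      logb_mono (by norm_num) h1
    have h3 : Real.logb 2 (4096:ℝ) = 12 := by
      rw [show (4096:ℝ) = 2^(12:ℕ) by norm_num, Real.logb_pow,
        Real.logb_self_eq_one (by norm_num)]
      norm_num
    linarith [h3 ▸ h2]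
  have hL2pos : 0 < L2 := by linarith
  -- f4 : logb 2 R = L2 / 2
  have hlogR : Real.logb 2 R = L2 / 2 := by
    rw [hR, hL2, Real.logb, Real.logb, Real.log_sqrt hn0]
    ring
  -- f5 : L2/2 ≤ q
  have hq_lb : L2 / 2 ≤ q := by
    rw [hq, ← hlogR]
    exact logb_mono (by linarith) hRd
  -- f6 : q ≤ L2/2 + 1
  have hq_ub : q ≤ L2 / 2 + 1 := by
    have h1 : (d:ℝ) + 1 ≤ 2 * R := by linarith
    have h2 : q ≤ Real.logb 2 (2 * R) := by
      rw [hq]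
      apply logb_mono (by positivity) h1
    have h3 : Real.logb 2 (2 * R) = 1 + L2/2 := by
      rw [Real.logb_mul (by norm_num) (by linarith),
        Real.logb_self_eq_one (by norm_num), hlogR]
    linarith
  have hqpos : 0 < q := by linarith
  -- f8 : logb 2 (L2/2 + 1) ≤ logb 2 L2 - 1 + 3 / L2
  have hf8 : Real.logb 2 (L2/2 + 1) ≤ Real.logb 2 L2 - 1 + 3 / L2 := by
    have hsplit : L2/2 + 1 = (L2/2) * (1 + 2/L2) := by
      field_simp
    have h1 : Real.logb 2 (L2/2 + 1)
        = Real.logb 2 (L2/2) + Real.logb 2 (1 + 2/L2) := by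
      rw [hsplit, Real.logb_mul (by positivity) (by positivity)]
    have h2 : Real.logb 2 (L2/2) = Real.logb 2 L2 - 1 := by
      rw [Real.logb_div (by positivity) (by norm_num),
        Real.logb_self_eq_one (by norm_num)]
    have h3 : Real.logb 2 (1 + 2/L2) ≤ 3 / L2 := by
      have hx : 0 < 1 + 2/L2 := by positivity
      have hlog : Real.log (1 + 2/L2) ≤ 2/L2 := by
        have := Real.log_le_sub_one_of_pos hx
        linarith
      rw [Real.logb, div_le_iff₀ (Real.log_pos (by norm_num))]
      have hl2 := log_two_ge
      have h23 : 3 / L2 * Real.log 2 ≥ 3 / L2 * (2/3) := by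
        apply mul_le_mul_of_nonneg_left hl2 (by positivity)
      have : 3 / L2 * (2/3) = 2 / L2 := by ring
      linarith
    linarith
  -- f7 : logb 2 q ≤ logb 2 (L2/2+1)
  have hf7 : Real.logb 2 q ≤ Real.logb 2 (L2/2 + 1) :=
    logb_mono hqpos hq_ub
  -- f9 : L2 ≤ 6 * Q
  have hf9 : L2 ≤ 6 * Q := by
    have hlogQ : Real.log Q = Real.log ((m:ℝ)+1) / 4 := by
      rw [hQ, Real.log_sqrt hR0, hR, Real.log_sqrt hn0]
      ring
    have h1 : Real.log Q ≤ Q - 1 := Real.log_le_sub_one_of_pos hQ0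
    have h2 : Real.log ((m:ℝ)+1) ≤ 4 * Q := by
      rw [show Real.log ((m:ℝ)+1) = 4 * Real.log Q by rw [hlogQ]; ring]
      nlinarith
    rw [hL2, Real.logb, div_le_iff₀ (Real.log_pos (by norm_num))]
    have hl2 := log_two_ge
    nlinarith
  -- key polynomial inequality
  have hmQ : (m:ℝ) = Q^4 - 1 := by
    have : Q^4 = (m:ℝ)+1 := by
      rw [show Q^4 = (Q^2)^2 by ring, hQsq, hRsq]
    linarith
  have hkey : (3*R + 5) * L2 ≤ 10.5 * m := by
    have h1 : (3*R + 5) * L2 ≤ (3*Q^2 + 5) * (6*Q) := by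
      have hRQ : R = Q^2 := hQsq.symm
      have h0 : 0 ≤ 3*R + 5 := by linarith
      have := mul_le_mul (le_refl (3*R+5)) hf9 (by linarith) h0
      nlinarith
    have hQ2 : (64:ℝ) ≤ Q^2 := by nlinarith
    have h5 : 64*Q ≤ Q^3 := by nlinarith
    have h3 : (512:ℝ) ≤ Q^3 := by nlinarith
    have h4 : 8*Q^3 ≤ Q^4 := by
      nlinarith [mul_le_mul_of_nonneg_right hQ8 (show (0:ℝ) ≤ Q^3 by positivity)]
    rw [hmQ]
    linarith
  -- difference of 20/q - 20/L2
  have hBterm : 10 / L2 ≤ 20 / q - 20 / L2 := by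
    have h1 : 20 / q ≥ 20 / (L2/2 + 1) := by
      apply div_le_div_of_nonneg_left (by norm_num) hqpos hq_ub
    have h2 : 30 / L2 ≤ 20 / (L2/2 + 1) := by
      rw [div_le_div_iff₀ hL2pos (by linarith)]
      nlinarith
    have h3 : 10 / L2 = 30 / L2 - 20 / L2 := by ring
    linarith
  -- assemble
  have hψ : Real.logb 2 q ≤ Real.logb 2 L2 - 1 + 3 / L2 := le_trans hf7 hf8
  have hfinal : 3*R + 5 ≤ 10.5 * m / L2 := by
    rw [le_div_iff₀ hL2pos]
    linarith
  have hm0 : (0:ℝ) < (m:ℝ) := by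
    have : (4096:ℝ) ≤ (m:ℝ) := by exact_mod_cast hm
    linarith
  have hdR3 : ((d:ℝ)+3)^2/2 ≤ (R+3)^2/2 := by nlinarith
  have hexp : (R+3)^2/2 + m = 1.5 * m + (3*R + 5) := by
    have : (R+3)^2 = R^2 + 6*R + 9 := by ring
    rw [this, hRsq]
    ring
  -- g values
  have hgm : g m = Real.logb 2 L2 + 11020 - 20 / L2 := by
    rw [g, hL2]
  have hgd : g d = Real.logb 2 q + 11020 - 20 / q := by
    rw [g, hq]
  have hmain : 1.5 * (m:ℝ) * g d + (1.5 * m + (3*R+5)) ≤ 1.5 * m * g m := by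
    have hdiff : 1 + 7/L2 ≤ g m - g d := by
      rw [hgm, hgd]
      have hψ' := hψ
      have hB' := hBterm
      ring_nf at hψ' hB' ⊢
      linarith
    have heq : 1.5 * (m:ℝ) * (1 + 7/L2) = 1.5*(m:ℝ) + 10.5 * (m:ℝ) / L2 := by
      field_simp
      ring
    have hgoal : 1.5 * (m:ℝ) + (3*R+5) ≤ 1.5 * (m:ℝ) * (1 + 7/L2) := by
      rw [heq]
      linarith
    have hprod : 1.5 * (m:ℝ) * (1 + 7/L2) ≤ 1.5 * (m:ℝ) * (g m - g d) :=
      mul_le_mul_of_nonneg_left hdiff (by positivity)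
    have hexp2 : 1.5 * (m:ℝ) * (g m - g d) = 1.5 * (m:ℝ) * g m - 1.5 * (m:ℝ) * g d := by
      ring
    linarith
  calc ((d:ℝ) + 3)^2 / 2 + m + 1.5 * m * g d
      ≤ (R+3)^2/2 + m + 1.5 * m * g d := by linarith
    _ = 1.5 * (m:ℝ) * g d + (1.5 * m + (3*R+5)) := by rw [hexp]; ring
    _ ≤ 1.5 * m * g m := hmain


lemma keySet_self (s : ℤ) : keySet s s = {s} := by
  ext x
  simp only [keySet, Finset.mem_insert, Finset.mem_filter, Finset.mem_image,
    Finset.mem_range, Finset.mem_singleton]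
  constructor
  · rintro (rfl | ⟨⟨k, hk, rfl⟩, hs⟩)
    · rfl
    · have hk0 : k = 0 := by omega
      subst hk0
      simp
  · rintro rfl; exact Or.inl rfl

lemma F_self (s : ℤ) : F s s = ∅ := by
  have hK : keySet s s = {s} := keySet_self s
  have hcp : childPairs s s = ∅ := by
    ext p
    simp only [childPairs, Finset.mem_filter, Finset.mem_product, hK,
      Finset.mem_singleton, Finset.notMem_empty, iff_false, not_and]
    rintro ⟨h1, h2⟩ h3
    exfalso; omega
  have hke : keyEdges s s = ∅ := by
    ext p
    simp only [keyEdges, Finset.mem_filter, Finset.mem_product, hK,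
      Finset.mem_singleton, Finset.notMem_empty, iff_false, not_and]
    rintro ⟨h1, h2⟩
    omega
  rw [F, dif_neg (by omega), hke, prevEdges, hcp]
  simp

lemma F_card_rec {s t : ℤ} (h3 : 3 ≤ t - s + 1) :
    (F s t).card ≤ (keyEdges s t).card + (prevEdges s t).card +
      ∑ p ∈ childPairs s t, (F p.1 p.2).card := by
  conv_lhs => rw [F]
  rw [dif_pos h3]
  refine le_trans (Finset.card_union_le _ _) ?_
  have h1 := Finset.card_union_le (keyEdges s t) (prevEdges s t)
  have hX : ((childPairs s t).attach.biUnion (fun p => F p.1.1 p.1.2)).card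
      ≤ ∑ p ∈ (childPairs s t).attach, (F p.1.1 p.1.2).card := Finset.card_biUnion_le
  have hEq : ∑ p ∈ (childPairs s t).attach, (F p.1.1 p.1.2).card
      = ∑ p ∈ childPairs s t, (F p.1 p.2).card :=
    Finset.sum_attach (childPairs s t) (fun q => (F q.1 q.2).card)
  omega

lemma main_bound : ∀ (m : ℕ) (s t : ℤ), t - s = (m : ℤ) →
    ((F s t).card : ℝ) ≤ 1.5 * m * g m := by
  intro m
  induction m using Nat.strong_induction_on with
  | _ m ih =>
    intro s t hts
    by_cases hm0 : m = 0
    · subst hm0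
      have hst : t = s := by omega
      subst hst
      rw [F_self]
      simp
    · have hm1 : 1 ≤ m := by omega
      by_cases hsmall : m ≤ 4095
      · have h1 : (F s t).card ≤ ((t - s).toNat + 1)^2 := F_card_le_sq s t
        have h2 : (t - s).toNat = m := by omega
        rw [h2] at h1
        have h3 : ((F s t).card : ℝ) ≤ ((m:ℝ) + 1)^2 := by
          have : (((m + 1)^2 : ℕ) : ℝ) = ((m:ℝ)+1)^2 := by push_cast; ring
          rw [← this]
          exact_mod_cast h1
        exact le_trans h3 (small_case hm1 hsmall)
      · -- big case
        push_neg at hsmall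
        have hm : 4096 ≤ m := hsmall
        have h3 : 3 ≤ t - s + 1 := by omega
        have hst : s ≤ t := by omega
        have hn : (t - s + 1).toNat = m + 1 := by omega
        set D : ℕ := Nat.sqrt (m + 1) with hD
        -- keyEdges bound
        have hKcard : (keySet s t).card ≤ D + 3 := by
          have := card_keySet_le (s := s) (t := t) (by omega)
          rwa [hn] at this
        have hkey2 := two_mul_card_keyEdges s t
        have hkeyR : ((keyEdges s t).card : ℝ) ≤ ((D:ℝ) + 3)^2 / 2 := by
          have h4 : 2 * (keyEdges s t).card ≤ (D + 3) * (D + 3) :=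
            le_trans hkey2 (Nat.mul_le_mul hKcard hKcard)
          have h5 : (2:ℝ) * (keyEdges s t).card ≤ ((D:ℝ) + 3) * ((D:ℝ) + 3) := by
            exact_mod_cast h4
          nlinarith
        -- prevEdges bound
        have hprevR : ((prevEdges s t).card : ℝ) ≤ (m:ℝ) := by
          have := card_prevEdges s t hst
          have h4 : (prevEdges s t).card ≤ m := by omega
          exact_mod_cast h4
        -- children bound
        have hD1 : 1 ≤ D := Nat.sqrt_pos.2 (by omega)
        have hgD : 0 ≤ g D := g_nonneg hD1
        have hchild : ((∑ p ∈ childPairs s t, (F p.1 p.2).card : ℕ) : ℝ)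
            ≤ 1.5 * (m:ℝ) * g D := by
          have hterm : ∀ p ∈ childPairs s t,
              ((F p.1 p.2).card : ℝ) ≤ 1.5 * ((p.2 - p.1).toNat : ℝ) * g D := by
            intro p hp
            have hc := consec_of_mem hp
            have hpos := consec_pos hc
            have hgap := consec_gap (by omega) hc
            rw [hn] at hgap
            have hwD : (p.2 - p.1).toNat ≤ D := by omega
            have hw1 : 1 ≤ (p.2 - p.1).toNat := by omega
            have hwlt : (p.2 - p.1).toNat < m := by
              have := child_lt h3 (by rw [Prod.mk.eta]; exact hp)
              omega
            have hih := ih _ hwlt p.1 p.2 (by omega)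
            refine le_trans hih ?_
            have := g_mono hw1 hwD
            apply mul_le_mul_of_nonneg_left this
            positivity
          calc ((∑ p ∈ childPairs s t, (F p.1 p.2).card : ℕ) : ℝ)
              = ∑ p ∈ childPairs s t, ((F p.1 p.2).card : ℝ) := by push_cast; rfl
            _ ≤ ∑ p ∈ childPairs s t, 1.5 * ((p.2 - p.1).toNat : ℝ) * g D :=
                Finset.sum_le_sum hterm
            _ = 1.5 * g D * ∑ p ∈ childPairs s t, ((p.2 - p.1).toNat : ℝ) := by
                rw [Finset.mul_sum]; congr 1; ext p; ring
            _ ≤ 1.5 * g D * (m:ℝ) := by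
                apply mul_le_mul_of_nonneg_left _ (by positivity)
                have hsum := sum_childPairs s t hst
                have h4 : ∑ p ∈ childPairs s t, (p.2 - p.1).toNat ≤ m := by omega
                calc ∑ p ∈ childPairs s t, (((p.2 - p.1).toNat : ℕ) : ℝ)
                    = ((∑ p ∈ childPairs s t, (p.2 - p.1).toNat : ℕ) : ℝ) := by push_cast; rfl
                  _ ≤ (m:ℝ) := by exact_mod_cast h4
            _ = 1.5 * (m:ℝ) * g D := by ring
        -- assemble
        have hrec := F_card_rec h3
        have hrecR : ((F s t).card : ℝ) ≤ ((keyEdges s t).card : ℝ)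
            + ((prevEdges s t).card : ℝ)
            + ((∑ p ∈ childPairs s t, (F p.1 p.2).card : ℕ) : ℝ) := by
          exact_mod_cast hrec
        have hbs := big_step hm
        calc ((F s t).card : ℝ)
            ≤ ((D:ℝ) + 3)^2/2 + (m:ℝ) + 1.5 * (m:ℝ) * g D := by linarith
          _ ≤ 1.5 * (m:ℝ) * g m := by
              have : ((Nat.sqrt (m+1) : ℝ) + 3)^2 / 2 + (m:ℝ)
                  + 1.5 * (m:ℝ) * g (Nat.sqrt (m+1)) ≤ 1.5 * (m:ℝ) * g m := hbs
              rw [← hD] at this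
              exact this

end LLD

/-- The total number of connections in a LogLog-DenseNet of depth `L` is at most
`1.5·L·log₂ log₂ L + o(L log log L)`: there is a constant `C` with
`C(L) ≤ 1.5·L·log₂ log₂ L + C·L` for all `L ≥ 4`. -/
theorem stmt13 : ∃ C : ℝ, ∀ L : ℕ, 4 ≤ L →
    (Set.ncard {p : ℤ × ℤ | LLEdge L p.1 p.2} : ℝ) ≤
      1.5 * L * Real.logb 2 (Real.logb 2 L) + C * L := by
  classical
  refine ⟨16534, fun L hL => ?_⟩
  have hL4 : (4:ℝ) ≤ (L:ℝ) := by exact_mod_cast hL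
  -- step 1 : ncard bound through the finset
  have hsub : {p : ℤ × ℤ | LLEdge L p.1 p.2} ⊆ ↑(LLD.F 0 L ∪ LLD.initEdges L) := by
    intro p hp
    have := LLD.LLEdge_mem (L := L) (i := p.1) (j := p.2) hp
    rw [Prod.mk.eta] at this
    exact_mod_cast this
  have h1 : Set.ncard {p : ℤ × ℤ | LLEdge L p.1 p.2}
      ≤ (LLD.F 0 L ∪ LLD.initEdges L).card := by
    have := Set.ncard_le_ncard hsub (Finset.finite_toSet _)
    rwa [Set.ncard_coe_finset] at this
  have hinit : (LLD.initEdges L).card ≤ L := by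
    calc (LLD.initEdges L).card ≤ (Finset.Icc (1:ℤ) L).card := Finset.card_image_le
      _ = L := by rw [Int.card_Icc]; omega
  have hFb : ((LLD.F 0 L).card : ℝ) ≤ 1.5 * L * LLD.g L :=
    LLD.main_bound L 0 L (by omega)
  have hcard : (Set.ncard {p : ℤ × ℤ | LLEdge L p.1 p.2} : ℝ)
      ≤ ((LLD.F 0 L).card : ℝ) + (L:ℝ) := by
    have h2 : (LLD.F 0 L ∪ LLD.initEdges L).card ≤ (LLD.F 0 L).card + L :=
      le_trans (Finset.card_union_le _ _) (by omega)
    have h3 : Set.ncard {p : ℤ × ℤ | LLEdge L p.1 p.2} ≤ (LLD.F 0 L).card + L :=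
      le_trans h1 h2
    exact_mod_cast h3
  -- step 2 : estimate g L
  have hlogL : (2:ℝ) ≤ Real.logb 2 (L:ℝ) := by
    have h4 : Real.logb 2 (4:ℝ) ≤ Real.logb 2 (L:ℝ) := LLD.logb_mono (by norm_num) hL4
    have h5 : Real.logb 2 (4:ℝ) = 2 := by
      rw [show (4:ℝ) = 2^(2:ℕ) by norm_num, Real.logb_pow,
        Real.logb_self_eq_one (by norm_num)]
      norm_num
    linarith
  have hstep : Real.logb 2 (Real.logb 2 ((L:ℝ)+1))
      ≤ Real.logb 2 (Real.logb 2 (L:ℝ)) + 1 := by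
    have e1 : Real.logb 2 ((L:ℝ)+1) ≤ 2 * Real.logb 2 (L:ℝ) := by
      have e2 : (L:ℝ) + 1 ≤ (L:ℝ)^2 := by nlinarith
      have e3 : Real.logb 2 ((L:ℝ)+1) ≤ Real.logb 2 ((L:ℝ)^2) :=
        LLD.logb_mono (by positivity) e2
      have e4 : Real.logb 2 ((L:ℝ)^2) = 2 * Real.logb 2 (L:ℝ) := by
        rw [Real.logb_pow]; norm_num
      linarith
    have e5 : Real.logb 2 (Real.logb 2 ((L:ℝ)+1))
        ≤ Real.logb 2 (2 * Real.logb 2 (L:ℝ)) := by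
      apply LLD.logb_mono ?_ e1
      have : (2:ℝ) ≤ (L:ℝ)+1 := by linarith
      linarith [LLD.one_le_logb this]
    have e6 : Real.logb 2 (2 * Real.logb 2 (L:ℝ))
        = 1 + Real.logb 2 (Real.logb 2 (L:ℝ)) := by
      rw [Real.logb_mul (by norm_num) (by linarith : Real.logb 2 (L:ℝ) ≠ 0),
        Real.logb_self_eq_one (by norm_num)]
    linarith
  have hgL : LLD.g L ≤ Real.logb 2 (Real.logb 2 (L:ℝ)) + 11022 := by
    have h6 : 0 < Real.logb 2 ((L:ℝ)+1) := by
      have : (2:ℝ) ≤ (L:ℝ)+1 := by linarith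
      linarith [LLD.one_le_logb this]
    have h7 : 0 ≤ 20 / Real.logb 2 ((L:ℝ)+1) := by positivity
    unfold LLD.g
    linarith [hstep]
  have hL0 : (0:ℝ) ≤ (L:ℝ) := by linarith
  calc (Set.ncard {p : ℤ × ℤ | LLEdge L p.1 p.2} : ℝ)
      ≤ ((LLD.F 0 L).card : ℝ) + (L:ℝ) := hcard
    _ ≤ 1.5 * L * LLD.g L + (L:ℝ) := by linarith
    _ ≤ 1.5 * L * (Real.logb 2 (Real.logb 2 (L:ℝ)) + 11022) + (L:ℝ) := by
        apply add_le_add_left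
        apply mul_le_mul_of_nonneg_left hgL (by positivity)
    _ ≤ 1.5 * L * Real.logb 2 (Real.logb 2 L) + 16534 * L := by
        have hψnn : 0 ≤ Real.logb 2 (Real.logb 2 (L:ℝ)) :=
          Real.logb_nonneg (by norm_num) (by linarith)
        nlinarith
end

section
/- If every vertex i in a connection graph on {0,...,L} has out-degree (number of input connections) at most d, then the maximum shortest-path distance between some pair of vertices is at least log_{d+1}(L) - 1; in particular, with d = 1 + log2 L inputs per layer, no connection scheme can achieve maximum backpropagation distance below Ω(log L / log log L). -/
lemma cover15 (E : ℕ → ℕ → Prop) (d : ℕ)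
    (hdeg : ∀ i, Set.ncard {j | E i j} ≤ d) (hdown : ∀ i j, E i j → j < i) :
    ∀ m, ∀ i, ∃ s : Finset ℕ, (∀ k ≤ m, ∀ j, stepsTo E k i j → j ∈ s) ∧
      s.card ≤ (d + 1) ^ m := by
  intro m
  induction m with
  | zero =>
    intro i
    refine ⟨{i}, ?_, by simp⟩
    intro k hk j hj
    interval_cases k
    simp only [stepsTo] at hj
    simp [hj]
  | succ m ih =>
    intro i
    have hfin : {j | E i j}.Finite :=
      (Set.finite_Iio i).subset (fun j hj => hdown i j hj)
    choose f hf hfc using ih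
    refine ⟨{i} ∪ hfin.toFinset.biUnion f, ?_, ?_⟩
    · intro k hk j hj
      match k with
      | 0 =>
        simp only [stepsTo] at hj
        simp [hj]
      | k + 1 =>
        obtain ⟨t, hEt, hst⟩ := hj
        have : j ∈ f t := hf t k (by omega) j hst
        simp only [Finset.mem_union, Finset.mem_biUnion]
        exact Or.inr ⟨t, by simpa using hEt, this⟩
    · calc ({i} ∪ hfin.toFinset.biUnion f).card
          ≤ 1 + (hfin.toFinset.biUnion f).card := by
            simpa using Finset.card_union_le {i} (hfin.toFinset.biUnion f)
        _ ≤ 1 + ∑ t ∈ hfin.toFinset, (f t).card := by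
            exact Nat.add_le_add_left (Finset.card_biUnion_le) 1
        _ ≤ 1 + hfin.toFinset.card * (d + 1) ^ m := by
            exact Nat.add_le_add_left
              (Finset.sum_le_card_nsmul _ _ _ (fun t _ => hfc t)) 1
        _ ≤ 1 + d * (d + 1) ^ m := by
            have : hfin.toFinset.card ≤ d := by
              rw [← Set.ncard_eq_toFinset_card _ hfin]
              exact hdeg i
            exact Nat.add_le_add_left (Nat.mul_le_mul_right _ this) 1
        _ ≤ (d + 1) ^ (m + 1) := by
            have h1 : 1 ≤ (d + 1) ^ m := Nat.one_le_pow _ _ (by omega)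
            calc 1 + d * (d + 1) ^ m ≤ (d + 1) ^ m + d * (d + 1) ^ m := by omega
              _ = (d + 1) ^ (m + 1) := by ring
  
/-- If every vertex of a connection graph on `{0,...,L}` has at most `d` input connections
(all pointing to earlier vertices), then some vertex `j` is at shortest-path distance at
least `log_{d+1}(L) - 1` from vertex `L`. -/
theorem stmt15 (L d : ℕ) (hd : 1 ≤ d) (hL : 1 ≤ L) (E : ℕ → ℕ → Prop)
    (hdeg : ∀ i, Set.ncard {j | E i j} ≤ d) (hdown : ∀ i j, E i j → j < i) :
    ∃ j ≤ L, ∀ m : ℕ, stepsTo E m L j → Real.logb ((d : ℝ) + 1) L - 1 ≤ m := by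
  by_contra hcon
  push_neg at hcon
  -- for each j ≤ L, get m j with stepsTo and (d+1)^(m j + 1) < L
  have hb : (1 : ℝ) < (d : ℝ) + 1 := by
    have : (1 : ℝ) ≤ (d : ℝ) := by exact_mod_cast hd
    linarith
  have hL0 : (0 : ℝ) < (L : ℝ) := by exact_mod_cast hL
  have key : ∀ j ≤ L, ∃ m : ℕ, stepsTo E m L j ∧ (d + 1) ^ (m + 1) < L := by
    intro j hj
    obtain ⟨m, hm, hlt⟩ := hcon j hj
    refine ⟨m, hm, ?_⟩
    have h1 : ((m : ℝ) + 1) < Real.logb ((d : ℝ) + 1) L := by linarith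
    have h2 : ((d : ℝ) + 1) ^ ((m : ℝ) + 1) < L :=
      (Real.lt_logb_iff_rpow_lt hb hL0).mp h1
    have h3 : ((d : ℝ) + 1) ^ (m + 1) < (L : ℝ) := by
      rw [← Real.rpow_natCast ((d : ℝ) + 1) (m + 1)] at *
      convert h2 using 2
      push_cast; ring
    exact_mod_cast (by exact h3 : ((d : ℕ) + 1 : ℝ) ^ (m + 1) < (L : ℝ))
  choose g hg1 hg2 using key
  -- take M = max over j in range (L+1)
  have hne : (Finset.range (L + 1)).Nonempty := ⟨0, by simp⟩
  set F : ℕ → ℕ := fun j => if h : j ≤ L then g j h else 0 with hF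
  obtain ⟨j0, hj0, hj0eq⟩ := Finset.exists_mem_eq_sup (Finset.range (L + 1)) hne F
  set M := (Finset.range (L + 1)).sup F with hM
  have hMlt : (d + 1) ^ (M + 1) < L := by
    rw [hj0eq]
    have hj0L : j0 ≤ L := by simpa [Nat.lt_succ_iff] using hj0
    simp only [hF, dif_pos hj0L]
    exact hg2 j0 hj0L
  obtain ⟨s, hs, hsc⟩ := cover15 E d hdeg hdown M L
  have hsub : Finset.range (L + 1) ⊆ s := by
    intro j hj
    have hjL : j ≤ L := by simpa [Nat.lt_succ_iff] using hj
    have hgle : g j hjL ≤ M := by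
      have := Finset.le_sup (f := F) hj
      simpa [hF, dif_pos hjL] using this
    exact hs (g j hjL) hgle j (hg1 j hjL)
  have : L + 1 ≤ (d + 1) ^ M := by
    calc L + 1 = (Finset.range (L + 1)).card := by simp
      _ ≤ s.card := Finset.card_le_card hsub
      _ ≤ (d + 1) ^ M := hsc
  have : (d + 1) ^ M ≤ (d + 1) ^ (M + 1) := Nat.pow_le_pow_right (by omega) (by omega)
  omega
end
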